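/- arXiv:1208.5992 — 3 statements merged into one kernel-verified Lean document; each statement's English description precedes it below -/
import Mathlib

section
/- There is an absolute constant C > 0 such that for all sufficiently large x and all y with log x ≤ y ≤ x^{1/3}, if α is the unique positive solution of ∑_{p ≤ y} (log p)/(p^α − 1) = log x and α' is the unique positive solution of ∑_{p ≤ y·(1+1/log x)} (log p)/(p^{α'} − 1) = log x, then |α' − α| ≤ C/(log x). -/
open scoped Classical

/-- `smoothCount x y` = Ψ(x,y), the number of `y`-smooth positive integers `n ≤ x`. -/
noncomputable def smoothCount (x y : ℝ) : ℕ :=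
  ((Finset.Icc 1 ⌊x⌋₊).filter fun n => ∀ p : ℕ, p.Prime → p ∣ n → (p : ℝ) ≤ y).card

/-- `smoothCountCoprime x y q` = Ψ_q(x,y), the number of `y`-smooth `n ≤ x` with `gcd(n,q) = 1`. -/
noncomputable def smoothCountCoprime (x y : ℝ) (q : ℕ) : ℕ :=
  ((Finset.Icc 1 ⌊x⌋₊).filter fun n =>
    (∀ p : ℕ, p.Prime → p ∣ n → (p : ℝ) ≤ y) ∧ Nat.gcd n q = 1).card

/-- `smoothCountAP x y q a` = Ψ(x,y;q,a), the number of `y`-smooth `n ≤ x` with `n ≡ a (mod q)`. -/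
noncomputable def smoothCountAP (x y : ℝ) (q a : ℕ) : ℕ :=
  ((Finset.Icc 1 ⌊x⌋₊).filter fun n =>
    (∀ p : ℕ, p.Prime → p ∣ n → (p : ℝ) ≤ y) ∧ (n : ZMod q) = (a : ZMod q)).card

/-- `smoothCharSum χ x y` = Ψ(x,y;χ) = ∑_{n ≤ x, n y-smooth} χ(n). -/
noncomputable def smoothCharSum {q : ℕ} (χ : DirichletCharacter ℂ q) (x y : ℝ) : ℂ :=
  ∑ n ∈ Finset.Icc 1 ⌊x⌋₊, if (∀ p : ℕ, p.Prime → p ∣ n → (p : ℝ) ≤ y) then χ n else 0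


open Finset


lemma centralBinom_le_pow (n : ℕ) (hn : 0 < n) :
    Nat.centralBinom n ≤ (2*n) ^ ((Finset.Icc 1 (2*n)).filter Nat.Prime).card := by
  have hC : Nat.centralBinom n ≠ 0 := (Nat.centralBinom_pos n).ne'
  have hsub : (Nat.centralBinom n).primeFactors ⊆ (Finset.Icc 1 (2*n)).filter Nat.Prime := by
    intro p hp
    obtain ⟨hpp, hpd, -⟩ := Nat.mem_primeFactors.1 hp
    have h1 : p ^ (Nat.centralBinom n).factorization p ≤ 2 * n := by
      unfold Nat.centralBinom
      exact Nat.pow_factorization_choose_le (by omega)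
    have h2 : 1 ≤ (Nat.centralBinom n).factorization p :=
      (Nat.Prime.factorization_pos_of_dvd hpp hC hpd)
    have : p ≤ p ^ (Nat.centralBinom n).factorization p :=
      Nat.le_self_pow (by omega) p
    exact Finset.mem_filter.2 ⟨Finset.mem_Icc.2 ⟨hpp.one_lt.le, by omega⟩, hpp⟩
  calc Nat.centralBinom n = (Nat.centralBinom n).factorization.prod (· ^ ·) :=
        (Nat.factorization_prod_pow_eq_self hC).symm
    _ = ∏ p ∈ (Nat.centralBinom n).primeFactors, p ^ (Nat.centralBinom n).factorization p := by
        rw [Nat.prod_factorization_eq_prod_primeFactors]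
    _ ≤ ∏ p ∈ (Nat.centralBinom n).primeFactors, 2*n := by
        apply Finset.prod_le_prod' ?_
        intro p hp
        unfold Nat.centralBinom
        exact Nat.pow_factorization_choose_le (by omega)
    _ = (2*n) ^ (Nat.centralBinom n).primeFactors.card := by rw [Finset.prod_const]
    _ ≤ (2*n) ^ ((Finset.Icc 1 (2*n)).filter Nat.Prime).card := by
        apply Nat.pow_le_pow_right (by omega)
        exact Finset.card_le_card hsub

lemma pi_lower (M : ℕ) (hM : 9 ≤ M) :
    ((M:ℝ) - 2) * Real.log 2 ≤ ((((Finset.Icc 1 M).filter Nat.Prime).card : ℝ) + 1) * Real.log M := by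
  set n := M / 2 with hn
  have hn4 : 4 ≤ n := by omega
  have h2n : 2*n ≤ M := by omega
  have h2n' : M ≤ 2*n + 1 := by omega
  have hπ : ((Finset.Icc 1 (2*n)).filter Nat.Prime).card ≤ ((Finset.Icc 1 M).filter Nat.Prime).card :=
    Finset.card_le_card (Finset.filter_subset_filter _ (Finset.Icc_subset_Icc le_rfl h2n))
  set π := ((Finset.Icc 1 M).filter Nat.Prime).card with hπdef
  have hnat : 4 ^ n ≤ M ^ (π + 1) := by
    calc 4 ^ n ≤ n * Nat.centralBinom n := (Nat.four_pow_lt_mul_centralBinom n hn4).le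
      _ ≤ n * (2*n) ^ ((Finset.Icc 1 (2*n)).filter Nat.Prime).card :=
          Nat.mul_le_mul_left n (centralBinom_le_pow n (by omega))
      _ ≤ (2*n) * (2*n) ^ π := by
          apply Nat.mul_le_mul (by omega) (Nat.pow_le_pow_right (by omega) hπ)
      _ = (2*n) ^ (π + 1) := by ring
      _ ≤ M ^ (π + 1) := Nat.pow_le_pow_left h2n _
  have hreal : ((4:ℝ)) ^ n ≤ (M:ℝ) ^ (π+1) := by exact_mod_cast hnat
  have hlog : (n:ℝ) * Real.log 4 ≤ ((π:ℝ)+1) * Real.log M := by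
    have := Real.log_le_log (by positivity) hreal
    rw [Real.log_pow, Real.log_pow] at this
    push_cast at this ⊢
    exact this
  have hlog4 : Real.log 4 = 2 * Real.log 2 := by
    rw [show (4:ℝ) = 2^2 by norm_num, Real.log_pow]; push_cast; ring
  have hnge : ((M:ℝ) - 1) / 2 ≤ (n:ℝ) := by
    have : (2*n : ℕ) = 2 * (n:ℕ) := rfl
    have h := h2n'
    have : (M:ℝ) ≤ 2*(n:ℝ) + 1 := by exact_mod_cast h2n'
    linarith
  have hlog2pos : 0 < Real.log 2 := Real.log_pos (by norm_num)
  calc ((M:ℝ) - 2) * Real.log 2 ≤ ((M:ℝ) - 1) / 2 * (2 * Real.log 2) := by nlinarith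
    _ ≤ (n:ℝ) * Real.log 4 := by rw [hlog4]; nlinarith
    _ ≤ ((π:ℝ)+1) * Real.log M := hlog

set_option maxHeartbeats 1000000 in
lemma theta_above (y : ℝ) (hy : (10:ℝ)^7 ≤ y) :
    y / 4 ≤ ∑ p ∈ (Finset.Icc (⌊y ^ ((1:ℝ)/2)⌋₊ + 1) ⌊y⌋₊).filter Nat.Prime, Real.log p := by
  have hy0 : (0:ℝ) < y := by norm_num at hy ⊢; linarith
  have hy1 : (1:ℝ) ≤ y := by norm_num at hy ⊢; linarith
  set m := ⌊y ^ ((1:ℝ)/2)⌋₊ with hm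
  set M := ⌊y⌋₊ with hMdef
  have hroot2 : y ^ ((1:ℝ)/2) ≤ y := by
    calc y ^ ((1:ℝ)/2) ≤ y ^ (1:ℝ) := Real.rpow_le_rpow_of_exponent_le hy1 (by norm_num)
      _ = y := Real.rpow_one y
  have hmM : m ≤ M := Nat.floor_le_floor hroot2
  have hM9 : 9 ≤ M := Nat.le_floor (by norm_num at hy ⊢; linarith)
  have hMy : (M:ℝ) ≤ y := Nat.floor_le hy0.le
  have hyM : y - 1 ≤ (M:ℝ) := by
    have := Nat.lt_floor_add_one y; linarith
  have hq0 : (0:ℝ) < y ^ ((1:ℝ)/4) := Real.rpow_pos_of_pos hy0 _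
  have hq56 : (56:ℝ) ≤ y ^ ((1:ℝ)/4) := by
    by_contra hlt
    push_neg at hlt
    have h4 : (y ^ ((1:ℝ)/4)) ^ (4:ℕ) < 56 ^ (4:ℕ) :=
      pow_lt_pow_left₀ hlt hq0.le (by norm_num)
    rw [← Real.rpow_natCast (y ^ ((1:ℝ)/4)) 4, ← Real.rpow_mul hy0.le] at h4
    norm_num at h4 hy
    linarith
  have hq2 : y ^ ((1:ℝ)/2) = y ^ ((1:ℝ)/4) * y ^ ((1:ℝ)/4) := by
    rw [← Real.rpow_add hy0]; norm_num
  have hq4 : y = y ^ ((1:ℝ)/4) * y ^ ((1:ℝ)/4) * y ^ ((1:ℝ)/4) * y ^ ((1:ℝ)/4) := by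
    rw [← Real.rpow_add hy0, ← Real.rpow_add hy0, ← Real.rpow_add hy0]; norm_num
  have hlogy4 : Real.log y ≤ 4 * y ^ ((1:ℝ)/4) := by
    have h1 : Real.log (y ^ ((1:ℝ)/4)) = (1/4) * Real.log y := by
      rw [Real.log_rpow hy0]
    have h2 := Real.log_le_sub_one_of_pos hq0
    linarith
  have hlogy1 : (1:ℝ) ≤ Real.log y := by
    rw [Real.le_log_iff_exp_le hy0]
    calc Real.exp 1 ≤ 3 := by
          have := Real.exp_one_lt_d9; linarith
      _ ≤ y := by norm_num at hy ⊢; linarith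
  have hlogypos : (0:ℝ) < Real.log y := by linarith
  set A := (Finset.Icc 1 M).filter Nat.Prime with hA
  set B := (Finset.Icc 1 m).filter Nat.Prime with hB
  set S := (Finset.Icc (m+1) M).filter Nat.Prime with hS
  have hunion : A = B ∪ S := by
    rw [hA, hB, hS, ← Finset.filter_union]
    congr 1
    ext a
    simp only [Finset.mem_union, Finset.mem_Icc]
    omega
  have hdisj : Disjoint B S := by
    rw [hB, hS, Finset.disjoint_left]
    intro a haB haS
    simp only [Finset.mem_filter, Finset.mem_Icc] at haB haS
    omega
  have hcard : A.card = B.card + S.card := by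
    rw [hunion, Finset.card_union_of_disjoint hdisj]
  have hcardB : B.card ≤ m := by
    calc B.card ≤ (Finset.Icc 1 m).card := Finset.card_filter_le _ _
      _ = m := by rw [Nat.card_Icc]; omega
  have hmle : (m:ℝ) ≤ y ^ ((1:ℝ)/2) := Nat.floor_le (Real.rpow_nonneg hy0.le _)
  have hSlog : ∀ p ∈ S, (1/2) * Real.log y ≤ Real.log p := by
    intro p hp
    rw [hS, Finset.mem_filter, Finset.mem_Icc] at hp
    obtain ⟨⟨h1, h2⟩, hpp⟩ := hp
    have hmp : (m:ℝ) + 1 ≤ (p:ℝ) := by exact_mod_cast h1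
    have hroot : y ^ ((1:ℝ)/2) < (p:ℝ) :=
      lt_of_lt_of_le (Nat.lt_floor_add_one _) hmp
    calc (1/2) * Real.log y = Real.log (y ^ ((1:ℝ)/2)) := by
          rw [Real.log_rpow hy0]
      _ ≤ Real.log p := Real.log_le_log (Real.rpow_pos_of_pos hy0 _) hroot.le
  have hsum : ((S.card : ℝ)) * ((1/2) * Real.log y) ≤ ∑ p ∈ S, Real.log p := by
    have := Finset.card_nsmul_le_sum S (fun p => Real.log p) ((1/2) * Real.log y) hSlog
    rwa [nsmul_eq_mul] at this
  have hπ := pi_lower M hM9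
  have hMpos : (0:ℝ) < (M:ℝ) := by
    have : (9:ℝ) ≤ (M:ℝ) := by exact_mod_cast hM9
    linarith
  have hlogM : Real.log M ≤ Real.log y := Real.log_le_log hMpos hMy
  have hcardR : ((A.card : ℝ)) = (B.card : ℝ) + (S.card : ℝ) := by exact_mod_cast hcard
  have hcardBR : (B.card : ℝ) ≤ y ^ ((1:ℝ)/2) := by
    calc (B.card : ℝ) ≤ (m:ℝ) := by exact_mod_cast hcardB
      _ ≤ y ^ ((1:ℝ)/2) := hmle
  have hAnonneg : (0:ℝ) ≤ (A.card : ℝ) + 1 := add_nonneg (Nat.cast_nonneg _) zero_le_one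
  have hchain : ((M:ℝ) - 2) * Real.log 2 ≤ ((B.card:ℝ) + (S.card:ℝ) + 1) * Real.log y := by
    calc ((M:ℝ) - 2) * Real.log 2 ≤ ((A.card:ℝ) + 1) * Real.log M := hπ
      _ ≤ ((A.card:ℝ) + 1) * Real.log y := by nlinarith
      _ = ((B.card:ℝ) + (S.card:ℝ) + 1) * Real.log y := by rw [hcardR]
  have hlog2 : (0.6931471803 : ℝ) < Real.log 2 := Real.log_two_gt_d9
  have hlog2' : Real.log 2 < 0.6931471808 := Real.log_two_lt_d9
  -- final numeric: y/2 <= S.card * log y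
  have hkey : y / 2 ≤ (S.card : ℝ) * Real.log y := by
    have h2 : (y-3) * Real.log 2 - ((B.card:ℝ) + 1) * Real.log y ≤ (S.card:ℝ) * Real.log y := by
      nlinarith [hchain, hyM, hlog2]
    have h3 : ((B.card:ℝ) + 1) * Real.log y ≤ (y ^ ((1:ℝ)/2) + 1) * (4 * y ^ ((1:ℝ)/4)) := by
      have hBnn : (0:ℝ) ≤ (B.card:ℝ) := Nat.cast_nonneg _
      have hroot0 : (0:ℝ) ≤ y ^ ((1:ℝ)/2) := Real.rpow_nonneg hy0.le _
      exact mul_le_mul (by linarith) hlogy4 (by linarith) (by linarith)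
    set q := y ^ ((1:ℝ)/4) with hqdef
    have hq1 : (1:ℝ) ≤ q := by linarith
    have hq3pos : (0:ℝ) < q*q*q := by positivity
    have a1 : 56*(q*q*q) ≤ q*(q*q*q) := by nlinarith
    have a2 : q ≤ q*q*q := by nlinarith
    have a3 : (2.1:ℝ) ≤ q*q*q := by nlinarith
    have key2 : y/2 + (y ^ ((1:ℝ)/2)+1)*(4*q) ≤ (y-3)*Real.log 2 := by
      have he : (y ^ ((1:ℝ)/2)+1)*(4*q) = 4*(q*q*q) + 4*q := by rw [hq2]; ring
      rw [he, hq4]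
      nlinarith [hlog2, a1, a2, a3, hq3pos,
        mul_nonneg (by nlinarith : (0:ℝ) ≤ q*q*q*q - 3) (by linarith : (0:ℝ) ≤ Real.log 2 - 0.6931471803)]
    linarith
  calc y / 4 = (y / 2) * (1/2) := by ring
    _ ≤ ((S.card : ℝ) * Real.log y) * (1/2) := by linarith
    _ = (S.card : ℝ) * ((1/2) * Real.log y) := by ring
    _ ≤ ∑ p ∈ S, Real.log p := hsum

noncomputable def Fsum (s z : ℝ) : ℝ :=
  ∑ p ∈ (Finset.Icc 1 ⌊z⌋₊).filter Nat.Prime, Real.log p / ((p : ℝ) ^ s - 1)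

lemma one_lt_rpow' {r s : ℝ} (hr : 1 < r) (hs : 0 < s) : 1 < r ^ s :=
  (Real.one_lt_rpow_iff_of_pos (by linarith)).2 (Or.inl ⟨hr, hs⟩)

lemma term_nonneg {r s : ℝ} (hr : 1 < r) (hs : 0 < s) : 0 ≤ Real.log r / (r ^ s - 1) := by
  have h1 := one_lt_rpow' hr hs
  have h2 : 0 ≤ Real.log r := Real.log_nonneg hr.le
  exact div_nonneg h2 (by linarith)

lemma W_anti {r s t : ℝ} (hr : 1 < r) (hs : 0 < s) (hst : s ≤ t) :
    Real.log r / (r ^ t - 1) ≤ Real.log r / (r ^ s - 1) := by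
  have h1 := one_lt_rpow' hr hs
  have h2 := one_lt_rpow' hr (lt_of_lt_of_le hs hst)
  have h3 : r ^ s ≤ r ^ t := Real.rpow_le_rpow_of_exponent_le hr.le hst
  exact div_le_div_of_nonneg_left (Real.log_nonneg hr.le) (by linarith) (by linarith)

lemma key_diff {r a b c : ℝ} (hr : 1 < r) (ha : 0 < a) (hab : a ≤ b) (hc : r ^ (a - b) ≤ c) :
    (1 - c) * (Real.log r / (r ^ a - 1)) ≤
      Real.log r / (r ^ a - 1) - Real.log r / (r ^ b - 1) := by
  have hr0 : (0:ℝ) < r := by linarith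
  have h1 := one_lt_rpow' hr ha
  have h2 := one_lt_rpow' hr (lt_of_lt_of_le ha hab)
  have hlog : 0 ≤ Real.log r := Real.log_nonneg hr.le
  have hW : Real.log r / (r ^ b - 1) ≤ r ^ (a - b) * (Real.log r / (r ^ a - 1)) := by
    have heq : r ^ (a-b) * (Real.log r / (r ^ a - 1)) = (Real.log r * r ^ a) / ((r ^ a - 1) * r ^ b) := by
      rw [Real.rpow_sub hr0]
      field_simp
    rw [heq, div_le_div_iff₀ (by linarith) (mul_pos (by linarith) (Real.rpow_pos_of_pos hr0 b))]
    nlinarith [Real.rpow_le_rpow_of_exponent_le hr.le hab]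
  have hWpos : 0 ≤ Real.log r / (r ^ a - 1) := div_nonneg hlog (by linarith)
  nlinarith [mul_le_mul_of_nonneg_right hc hWpos]

lemma Fsum_mono_z {s z w : ℝ} (hs : 0 < s) (hzw : z ≤ w) : Fsum s z ≤ Fsum s w := by
  apply Finset.sum_le_sum_of_subset_of_nonneg
  · exact Finset.filter_subset_filter _ (Finset.Icc_subset_Icc le_rfl (Nat.floor_le_floor hzw))
  · intro p hp _
    rw [Finset.mem_filter] at hp
    have h2 : (1:ℝ) < (p:ℝ) := by exact_mod_cast hp.2.one_lt
    exact term_nonneg h2 hs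

lemma Fsum_anti {s t z : ℝ} (hs : 0 < s) (hst : s ≤ t) : Fsum t z ≤ Fsum s z := by
  apply Finset.sum_le_sum
  intro p hp
  rw [Finset.mem_filter] at hp
  have h2 : (1:ℝ) < (p:ℝ) := by exact_mod_cast hp.2.one_lt
  exact W_anti h2 hs hst

lemma Fsum_sub_le {s z w : ℝ} (hs : 0 < s) (h2 : 2 ≤ z) (hzw : z ≤ w) :
    Fsum s w - Fsum s z ≤ ((⌊w⌋₊ : ℝ) - (⌊z⌋₊ : ℝ)) * (Real.log w / (z ^ s - 1)) := by
  have hz0 : (0:ℝ) < z := by linarith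
  have hw0 : (0:ℝ) < w := by linarith
  have hfl : ⌊z⌋₊ ≤ ⌊w⌋₊ := Nat.floor_le_floor hzw
  have hzs : (1:ℝ) < z ^ s := one_lt_rpow' (by linarith) hs
  have hunion : Finset.Icc 1 ⌊w⌋₊ = Finset.Icc 1 ⌊z⌋₊ ∪ Finset.Icc (⌊z⌋₊+1) ⌊w⌋₊ := by
    ext a; simp only [Finset.mem_union, Finset.mem_Icc]; omega
  have hdisj : Disjoint ((Finset.Icc 1 ⌊z⌋₊).filter Nat.Prime)
      (((Finset.Icc (⌊z⌋₊+1) ⌊w⌋₊)).filter Nat.Prime) := by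
    rw [Finset.disjoint_left]
    intro a ha hb
    simp only [Finset.mem_filter, Finset.mem_Icc] at ha hb
    omega
  have hsplit : Fsum s w = Fsum s z +
      ∑ p ∈ (Finset.Icc (⌊z⌋₊+1) ⌊w⌋₊).filter Nat.Prime, Real.log p / ((p:ℝ) ^ s - 1) := by
    rw [Fsum, Fsum, hunion, Finset.filter_union, Finset.sum_union hdisj]
  rw [hsplit]
  have hcard : (((Finset.Icc (⌊z⌋₊+1) ⌊w⌋₊).filter Nat.Prime).card : ℝ) ≤ (⌊w⌋₊ : ℝ) - (⌊z⌋₊ : ℝ) := by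
    have h1 : ((Finset.Icc (⌊z⌋₊+1) ⌊w⌋₊).filter Nat.Prime).card ≤ ⌊w⌋₊ - ⌊z⌋₊ := by
      calc ((Finset.Icc (⌊z⌋₊+1) ⌊w⌋₊).filter Nat.Prime).card
          ≤ (Finset.Icc (⌊z⌋₊+1) ⌊w⌋₊).card := Finset.card_filter_le _ _
        _ = ⌊w⌋₊ - ⌊z⌋₊ := by rw [Nat.card_Icc]; omega
    calc (((Finset.Icc (⌊z⌋₊+1) ⌊w⌋₊).filter Nat.Prime).card : ℝ) ≤ ((⌊w⌋₊ - ⌊z⌋₊ : ℕ) : ℝ) := by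
          exact_mod_cast h1
      _ = (⌊w⌋₊ : ℝ) - (⌊z⌋₊ : ℝ) := by rw [Nat.cast_sub hfl]
  have hterm : ∀ p ∈ (Finset.Icc (⌊z⌋₊+1) ⌊w⌋₊).filter Nat.Prime,
      Real.log p / ((p:ℝ) ^ s - 1) ≤ Real.log w / (z ^ s - 1) := by
    intro p hp
    rw [Finset.mem_filter, Finset.mem_Icc] at hp
    obtain ⟨⟨hp1, hp2⟩, hpp⟩ := hp
    have hpz : z < (p:ℝ) := by
      have h1 : (⌊z⌋₊ : ℝ) + 1 ≤ (p:ℝ) := by exact_mod_cast hp1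
      have h2 := Nat.lt_floor_add_one z
      linarith
    have hpw : (p:ℝ) ≤ w := by
      have h1 : (p:ℝ) ≤ (⌊w⌋₊ : ℝ) := by exact_mod_cast hp2
      have h2 := Nat.floor_le hw0.le
      linarith
    have hps : z ^ s < (p:ℝ) ^ s := Real.rpow_lt_rpow hz0.le hpz hs
    have hlogp : Real.log p ≤ Real.log w := Real.log_le_log (by linarith) hpw
    have hlogp0 : 0 ≤ Real.log p := Real.log_nonneg (by linarith)
    exact div_le_div₀ (hlogp0.trans hlogp) hlogp (by linarith) (by linarith)
  have hb0 : 0 ≤ Real.log w / (z ^ s - 1) := by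
    have h1 : 0 ≤ Real.log w := Real.log_nonneg (by linarith)
    have h2 : (0:ℝ) < z ^ s - 1 := by linarith
    exact div_nonneg h1 h2.le
  have hsum := Finset.sum_le_card_nsmul ((Finset.Icc (⌊z⌋₊+1) ⌊w⌋₊).filter Nat.Prime) _ _ hterm
  rw [nsmul_eq_mul] at hsum
  have hmul := mul_le_mul_of_nonneg_right hcard hb0
  linarith

set_option maxHeartbeats 1000000 in
/-- **Stability of the saddle point under small changes of `y`.** -/
theorem saddle_point_stability :
    ∃ C : ℝ, 0 < C ∧
      ∃ x₀ : ℝ, ∀ x y α α' : ℝ,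
        x₀ ≤ x → Real.log x ≤ y → y ≤ x ^ ((1 : ℝ) / 3) →
        0 < α → 0 < α' →
        (∑ p ∈ (Finset.Icc 1 ⌊y⌋₊).filter Nat.Prime,
            Real.log p / ((p : ℝ) ^ α - 1)) = Real.log x →
        (∑ p ∈ (Finset.Icc 1 ⌊y * (1 + 1 / Real.log x)⌋₊).filter Nat.Prime,
            Real.log p / ((p : ℝ) ^ α' - 1)) = Real.log x →
        |α' - α| ≤ C / Real.log x := by
  refine ⟨32 * Real.exp 2, by positivity, Real.exp ((10:ℝ)^7), ?_⟩
  intro x y α α' hx₀ hLy hyx hα hα' hFa hFa'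
  have hFα : Fsum α y = Real.log x := by unfold Fsum; exact hFa
  have hFα' : Fsum α' (y * (1 + 1 / Real.log x)) = Real.log x := by unfold Fsum; exact hFa'
  set L := Real.log x with hLdef
  have hx0 : (0:ℝ) < x := lt_of_lt_of_le (Real.exp_pos _) hx₀
  have hL7 : (10:ℝ)^7 ≤ L := (Real.le_log_iff_exp_le hx0).2 hx₀
  have hL0 : (0:ℝ) < L := by norm_num at hL7 ⊢; linarith
  have hL6 : (6:ℝ) ≤ L := by norm_num at hL7 ⊢; linarith
  have hy7 : (10:ℝ)^7 ≤ y := le_trans hL7 hLy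
  have hy0 : (0:ℝ) < y := by norm_num at hy7 ⊢; linarith
  have hy2 : (2:ℝ) ≤ y := by norm_num at hy7 ⊢; linarith
  have hy1 : (1:ℝ) < y := by linarith
  have hyL : L ≤ y := hLy
  set y' := y * (1 + 1/L) with hy'def
  have hy'eq : y' = y + y/L := by rw [hy'def]; field_simp
  have hyy' : y ≤ y' := by
    have h1 : 0 < y/L := div_pos hy0 hL0
    linarith
  have hy'0 : (0:ℝ) < y' := by linarith
  -- logs
  have hlogypos : (0:ℝ) < Real.log y := Real.log_pos hy1
  have hlogy1 : (1:ℝ) ≤ Real.log y := by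
    rw [Real.le_log_iff_exp_le hy0]
    have := Real.exp_one_lt_d9
    norm_num at hy7 ⊢; linarith
  have hlogy3 : Real.log y ≤ L/3 := by
    have h1 : Real.log y ≤ Real.log (x ^ ((1:ℝ)/3)) := Real.log_le_log hy0 hyx
    rw [Real.log_rpow hx0] at h1
    linarith
  have hlogy'u : Real.log y' ≤ Real.log y + 1/L := by
    rw [hy'def, Real.log_mul (by linarith) (by positivity)]
    have h1 : Real.log (1 + 1/L) ≤ (1 + 1/L) - 1 := Real.log_le_sub_one_of_pos (by positivity)
    linarith
  have hLinv : 1/L ≤ 1 := by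
    rw [div_le_one hL0]; linarith
  have hlogy'2 : Real.log y' ≤ 2 * Real.log y := by linarith
  have hlogy'L : Real.log y' ≤ L/2 := by linarith
  have hlogy'0 : 0 ≤ Real.log y' := Real.log_nonneg (by linarith)
  -- rpow facts
  have hyα : 1 < y ^ α := one_lt_rpow' hy1 hα
  have hyα' : 1 < y ^ α' := one_lt_rpow' hy1 hα'
  -- prime sets
  set m := ⌊y ^ ((1:ℝ)/2)⌋₊ with hmdef
  set S := (Finset.Icc (m+1) ⌊y⌋₊).filter Nat.Prime with hSdef
  have hθ : y/4 ≤ ∑ p ∈ S, Real.log p := theta_above y hy7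
  have hSsub : S ⊆ (Finset.Icc 1 ⌊y⌋₊).filter Nat.Prime :=
    Finset.filter_subset_filter _ (Finset.Icc_subset_Icc (by omega) le_rfl)
  have hSfacts : ∀ p ∈ S, 1 < (p:ℝ) ∧ (p:ℝ) ≤ y ∧ Real.log y / 2 ≤ Real.log p := by
    intro p hp
    rw [hSdef, Finset.mem_filter, Finset.mem_Icc] at hp
    obtain ⟨⟨h1, h2⟩, hpp⟩ := hp
    have hp1 : (1:ℝ) < (p:ℝ) := by exact_mod_cast hpp.one_lt
    have hpy : (p:ℝ) ≤ y := by
      have h3 := Nat.floor_le hy0.le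
      have h2' : (p:ℝ) ≤ (⌊y⌋₊:ℝ) := by exact_mod_cast h2
      linarith
    refine ⟨hp1, hpy, ?_⟩
    have hm1 : (m:ℝ) + 1 ≤ (p:ℝ) := by exact_mod_cast h1
    have hroot : y ^ ((1:ℝ)/2) < (p:ℝ) := lt_of_lt_of_le (Nat.lt_floor_add_one _) hm1
    have h4 := Real.log_le_log (Real.rpow_pos_of_pos hy0 _) hroot.le
    rw [Real.log_rpow hy0] at h4
    linarith
  -- gap lemma
  have hgap : ∀ b c : ℝ, α ≤ b → 0 ≤ c → c ≤ 1 → (∀ p ∈ S, (p:ℝ) ^ (α - b) ≤ c) →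
      (1 - c) * ((y/4) / (y ^ α - 1)) ≤ Fsum α y - Fsum b y := by
    intro b c hab hc0 hc1 hpc
    have hWlow : (y/4) / (y ^ α - 1) ≤ ∑ p ∈ S, Real.log p / ((p:ℝ) ^ α - 1) := by
      have h1 : ∀ p ∈ S, Real.log p / (y ^ α - 1) ≤ Real.log p / ((p:ℝ) ^ α - 1) := by
        intro p hp
        obtain ⟨hp1, hpy, -⟩ := hSfacts p hp
        have hpα : (p:ℝ) ^ α ≤ y ^ α := Real.rpow_le_rpow (by linarith) hpy hα.le
        have hpα1 : 1 < (p:ℝ) ^ α := one_lt_rpow' hp1 hα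
        exact div_le_div_of_nonneg_left (Real.log_nonneg hp1.le) (by linarith) (by linarith)
      calc (y/4) / (y ^ α - 1) ≤ (∑ p ∈ S, Real.log p) / (y ^ α - 1) :=
            (div_le_div_iff_of_pos_right (by linarith)).2 hθ
        _ = ∑ p ∈ S, Real.log p / (y ^ α - 1) := Finset.sum_div _ _ _
        _ ≤ _ := Finset.sum_le_sum h1
    have h2 : ∀ p ∈ S, (1-c) * (Real.log p / ((p:ℝ) ^ α - 1)) ≤
        Real.log p / ((p:ℝ) ^ α - 1) - Real.log p / ((p:ℝ) ^ b - 1) := by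
      intro p hp
      obtain ⟨hp1, -, -⟩ := hSfacts p hp
      exact key_diff hp1 hα hab (hpc p hp)
    have h3 : ∑ p ∈ S, (Real.log p / ((p:ℝ) ^ α - 1) - Real.log p / ((p:ℝ) ^ b - 1)) ≤
        Fsum α y - Fsum b y := by
      rw [Fsum, Fsum, ← Finset.sum_sub_distrib]
      apply Finset.sum_le_sum_of_subset_of_nonneg hSsub
      intro p hp _
      rw [Finset.mem_filter] at hp
      have hp1 : (1:ℝ) < (p:ℝ) := by exact_mod_cast hp.2.one_lt
      have := W_anti hp1 hα hab
      linarith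
    have h4 := mul_le_mul_of_nonneg_left hWlow (by linarith only [hc1] : (0:ℝ) ≤ 1 - c)
    rw [Finset.mul_sum] at h4
    have h5 := Finset.sum_le_sum h2
    linarith only [h3, h4, h5]
  -- tail bound
  have htail : ∀ s : ℝ, 0 < s → Fsum s y' - Fsum s y ≤ (2*y/L) * (Real.log y' / (y ^ s - 1)) := by
    intro s hs
    have h1 := Fsum_sub_le hs hy2 hyy'
    have hcount : (⌊y'⌋₊:ℝ) - (⌊y⌋₊:ℝ) ≤ 2*y/L := by
      have h2 : (⌊y'⌋₊:ℝ) ≤ y' := Nat.floor_le hy'0.le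
      have h3 : y - 1 ≤ (⌊y⌋₊:ℝ) := by
        have := Nat.lt_floor_add_one y; linarith
      have h4 : 1 ≤ y/L := (one_le_div hL0).2 hyL
      have h5 : 2*y/L = y/L + y/L := by ring
      linarith
    have hys : (1:ℝ) < y ^ s := one_lt_rpow' hy1 hs
    have hb0 : 0 ≤ Real.log y' / (y ^ s - 1) := div_nonneg hlogy'0 (by linarith)
    calc Fsum s y' - Fsum s y ≤ ((⌊y'⌋₊:ℝ) - (⌊y⌋₊:ℝ)) * (Real.log y' / (y ^ s - 1)) := h1
      _ ≤ (2*y/L) * (Real.log y' / (y ^ s - 1)) := mul_le_mul_of_nonneg_right hcount hb0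
  -- step A : α ≤ α'
  have hαα' : α ≤ α' := by
    by_contra hcon
    push_neg at hcon
    have h2mem : 2 ∈ (Finset.Icc 1 ⌊y⌋₊).filter Nat.Prime := by
      rw [Finset.mem_filter, Finset.mem_Icc]
      exact ⟨⟨one_le_two, Nat.le_floor (by exact_mod_cast hy2)⟩, Nat.prime_two⟩
    have hstrict : Fsum α y < Fsum α' y := by
      apply Finset.sum_lt_sum
      · intro p hp
        rw [Finset.mem_filter] at hp
        have hp1 : (1:ℝ) < (p:ℝ) := by exact_mod_cast hp.2.one_lt
        exact W_anti hp1 hα' hcon.le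
      · refine ⟨2, h2mem, ?_⟩
        have h21 : (1:ℝ) < ((2:ℕ):ℝ) := by norm_num
        have hlt : ((2:ℕ):ℝ) ^ α' < ((2:ℕ):ℝ) ^ α := Real.rpow_lt_rpow_of_exponent_lt h21 hcon
        have ha1 : 1 < ((2:ℕ):ℝ) ^ α' := one_lt_rpow' h21 hα'
        exact div_lt_div_of_pos_left (Real.log_pos h21) (by linarith) (by linarith)
    have hmono := Fsum_mono_z hα' hyy'
    linarith only [hstrict, hmono, hFα, hFα']
  have hδ0 : 0 ≤ α' - α := by linarith
  have hyαα' : y ^ α ≤ y ^ α' := Real.rpow_le_rpow_of_exponent_le hy1.le hαα'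
  have hden0 : (0:ℝ) < y ^ α - 1 := by linarith
  rw [abs_of_nonneg hδ0]
  by_cases hcase : α' - α ≤ 4 / Real.log y
  · -- CASE 1
    set u := (α' - α) * Real.log y / 2 with hudef
    have hu0 : 0 ≤ u := by
      have h0 := mul_nonneg hδ0 hlogypos.le
      rw [hudef]; linarith only [h0]
    have hu2 : u ≤ 2 := by
      rw [le_div_iff₀ hlogypos] at hcase
      rw [hudef]; linarith only [hcase]
    have hc1 : Real.exp (-u) ≤ 1 := by
      rw [← Real.exp_zero]
      exact Real.exp_le_exp.2 (by linarith)
    have hc0 : (0:ℝ) ≤ Real.exp (-u) := (Real.exp_pos _).le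
    have hpc : ∀ p ∈ S, (p:ℝ) ^ (α - α') ≤ Real.exp (-u) := by
      intro p hp
      obtain ⟨hp1, hpy, hplog⟩ := hSfacts p hp
      rw [Real.rpow_def_of_pos (by linarith)]
      apply Real.exp_le_exp.2
      have h6 := mul_le_mul_of_nonneg_right hplog hδ0
      rw [hudef]
      linarith only [h6]
    have hg := hgap α' (Real.exp (-u)) hαα' hc0 hc1 hpc
    have ht := htail α' hα'
    have hTeq : Fsum α y - Fsum α' y = Fsum α' y' - Fsum α' y := by rw [hFα, hFα']
    have hden : Real.log y' / (y ^ α' - 1) ≤ Real.log y' / (y ^ α - 1) :=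
      div_le_div_of_nonneg_left hlogy'0 (by linarith) (by linarith)
    have hyL0 : (0:ℝ) ≤ 2*y/L := by positivity
    have hmain : (1 - Real.exp (-u)) * ((y/4) / (y ^ α - 1)) ≤
        (2*y/L) * (Real.log y' / (y ^ α - 1)) := by
      have h7 := mul_le_mul_of_nonneg_left hden hyL0
      linarith only [hg, ht, hTeq, h7]
    have hA : ((y/4)/(y ^ α - 1)) * (y ^ α - 1) = y/4 := div_mul_cancel₀ _ hden0.ne'
    have hB : (Real.log y'/(y ^ α - 1)) * (y ^ α - 1) = Real.log y' := div_mul_cancel₀ _ hden0.ne'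
    have hmain2 : (1 - Real.exp (-u)) * (y/4) ≤ (2*y/L) * Real.log y' := by
      have h8 := mul_le_mul_of_nonneg_right hmain hden0.le
      rw [mul_assoc, mul_assoc, hA, hB] at h8
      exact h8
    have hue : u * Real.exp (-2) ≤ 1 - Real.exp (-u) := by
      have h1 := Real.add_one_le_exp u
      have h2 : Real.exp (-u) * Real.exp u = 1 := by rw [← Real.exp_add]; norm_num
      have h3 : Real.exp (-2) ≤ Real.exp (-u) := Real.exp_le_exp.2 (by linarith only [hu2])
      have h4 := Real.exp_pos (-u)
      linarith only [h2, mul_le_mul_of_nonneg_left h1 h4.le, mul_nonneg hu0 (sub_nonneg.2 h3)]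
    have hstep : (α' - α) * Real.log y * Real.exp (-2) * (y/8) ≤ 4*y*Real.log y/L := by
      have h5 : (2*y/L) * Real.log y' ≤ (2*y/L)*(2*Real.log y) :=
        mul_le_mul_of_nonneg_left hlogy'2 hyL0
      have h6 : u * Real.exp (-2) * (y/4) ≤ (1 - Real.exp (-u)) * (y/4) :=
        mul_le_mul_of_nonneg_right hue (by positivity)
      calc (α' - α) * Real.log y * Real.exp (-2) * (y/8)
          = u * Real.exp (-2) * (y/4) := by rw [hudef]; ring
        _ ≤ (1 - Real.exp (-u)) * (y/4) := h6
        _ ≤ (2*y/L) * Real.log y' := hmain2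
        _ ≤ (2*y/L)*(2*Real.log y) := h5
        _ = 4*y*Real.log y/L := by ring
    have hylpos : 0 < y * Real.log y := mul_pos hy0 hlogypos
    have hexp2 : (0:ℝ) < Real.exp 2 := Real.exp_pos 2
    have hee : Real.exp (-2) * Real.exp 2 = 1 := by rw [← Real.exp_add]; norm_num
    rw [le_div_iff₀ hL0]
    have hL' := mul_le_mul_of_nonneg_right hstep hL0.le
    have hcan : 4*y*Real.log y/L*L = 4*(y*Real.log y) := by field_simp
    rw [hcan] at hL'
    have h8 := mul_le_mul_of_nonneg_right hL' hexp2.le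
    have hsimp : (α' - α) * Real.log y * Real.exp (-2) * (y/8) * L * Real.exp 2
        = (α' - α) * L * (y * Real.log y) / 8 * (Real.exp (-2) * Real.exp 2) := by ring
    rw [hsimp, hee, mul_one] at h8
    have h9 : (α' - α) * L * (y * Real.log y) ≤ 32 * Real.exp 2 * (y * Real.log y) := by
      linarith only [h8]
    exact le_of_mul_le_mul_right h9 hylpos
  · -- CASE 2
    exfalso
    push_neg at hcase
    set b := α + 4 / Real.log y with hbdef
    have h4l : (0:ℝ) < 4 / Real.log y := by positivity
    have hb0 : 0 < b := by rw [hbdef]; linarith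
    have hαb : α ≤ b := by rw [hbdef]; linarith
    have hbα' : b ≤ α' := by rw [hbdef]; linarith
    have hpc2 : ∀ p ∈ S, (p:ℝ) ^ (α - b) ≤ Real.exp (-2) := by
      intro p hp
      obtain ⟨hp1, hpy, hplog⟩ := hSfacts p hp
      rw [Real.rpow_def_of_pos (by linarith)]
      apply Real.exp_le_exp.2
      have heq : α - b = -(4/Real.log y) := by rw [hbdef]; ring
      rw [heq]
      have h6 := mul_le_mul_of_nonneg_right hplog h4l.le
      have h7 : Real.log y / 2 * (4 / Real.log y) = 2 := by
        field_simp; ring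
      linarith only [h6, h7]
    have hc1 : Real.exp (-2) ≤ 1 := by
      rw [← Real.exp_zero]; exact Real.exp_le_exp.2 (by norm_num)
    have hg2 := hgap b (Real.exp (-2)) hαb (Real.exp_pos _).le hc1 hpc2
    have ht2 := htail b hb0
    have hmono2 : Fsum α' y' ≤ Fsum b y' := Fsum_anti hb0 hbα'
    have hexp4 : (0:ℝ) < Real.exp 4 := Real.exp_pos 4
    have hyb : y ^ b = y ^ α * Real.exp 4 := by
      rw [hbdef, Real.rpow_add hy0]
      congr 1
      rw [Real.rpow_def_of_pos hy0]
      congr 1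
      field_simp
    have h1e4 : (1:ℝ) ≤ Real.exp 4 := Real.one_le_exp (by norm_num)
    have hyb1 : Real.exp 4 * (y ^ α - 1) ≤ y ^ b - 1 := by
      rw [hyb]; linarith only [h1e4]
    have htden : Real.log y' / (y ^ b - 1) ≤ Real.log y' / (Real.exp 4 * (y ^ α - 1)) :=
      div_le_div_of_nonneg_left hlogy'0 (mul_pos hexp4 hden0) hyb1
    have hyL0 : (0:ℝ) ≤ 2*y/L := by positivity
    have hT2 : Fsum b y' - Fsum b y ≤ (2*y/L) * (Real.log y' / (Real.exp 4 * (y ^ α - 1))) :=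
      le_trans ht2 (mul_le_mul_of_nonneg_left htden hyL0)
    have hGtail : (1 - Real.exp (-2)) * ((y/4)/(y ^ α - 1)) ≤
        (2*y/L) * (Real.log y'/(Real.exp 4 * (y ^ α - 1))) := by
      have hLle : L ≤ Fsum b y' := by rw [← hFα']; exact hmono2
      have h10 : Fsum α y - Fsum b y ≤ Fsum b y' - Fsum b y := by
        rw [hFα]; linarith only [hLle]
      linarith only [hg2, hT2, h10]
    have hm1 : ((y/4)/(y ^ α - 1)) * (y ^ α - 1) = y/4 := div_mul_cancel₀ _ hden0.ne'
    have hm2 : (Real.log y'/(Real.exp 4 * (y ^ α - 1))) * (y ^ α - 1) = Real.log y'/Real.exp 4 := by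
      field_simp
    have h := mul_le_mul_of_nonneg_right hGtail hden0.le
    rw [mul_assoc, mul_assoc, hm1, hm2] at h
    have h7 : (2*y/L)*(Real.log y'/Real.exp 4) ≤ y/Real.exp 4 := by
      have he : (2*y/L)*((L/2)/Real.exp 4) = y/Real.exp 4 := by field_simp
      rw [← he]
      exact mul_le_mul_of_nonneg_left ((div_le_div_iff_of_pos_right hexp4).2 hlogy'L) hyL0
    have he1 : (2.7182818283:ℝ) < Real.exp 1 := Real.exp_one_gt_d9
    have he2 : Real.exp 2 = Real.exp 1 * Real.exp 1 := by rw [← Real.exp_add]; norm_num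
    have he4eq : Real.exp 4 = Real.exp 2 * Real.exp 2 := by rw [← Real.exp_add]; norm_num
    have hee : Real.exp (-2) * Real.exp 2 = 1 := by rw [← Real.exp_add]; norm_num
    have hsq : (2.7182818283:ℝ) * 2.7182818283 ≤ Real.exp 1 * Real.exp 1 :=
      mul_le_mul he1.le he1.le (by norm_num) (Real.exp_pos 1).le
    have he2b : (7:ℝ) ≤ Real.exp 2 := by rw [he2]; linarith only [hsq]
    have hsq2 : (7:ℝ) * 7 ≤ Real.exp 2 * Real.exp 2 :=
      mul_le_mul he2b he2b (by norm_num) (Real.exp_pos 2).le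
    have he4b : (49:ℝ) ≤ Real.exp 4 := by rw [he4eq]; linarith only [hsq2]
    have hprod : Real.exp (-2) * 7 ≤ Real.exp (-2) * Real.exp 2 :=
      mul_le_mul_of_nonneg_left he2b (Real.exp_pos _).le
    have hem2 : Real.exp (-2) ≤ 1/7 := by linarith only [hee, hprod]
    have h8 : y/Real.exp 4 ≤ y/49 := div_le_div_of_nonneg_left hy0.le (by norm_num) he4b
    have hprod2 : (0:ℝ) ≤ (1/7 - Real.exp (-2)) * y :=
      mul_nonneg (by linarith only [hem2]) hy0.le
    linarith only [h, h7, h8, hy0, hprod2]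
end

section
/- There is an absolute constant C > 0 such that for all sufficiently large x and all y with log x ≤ y ≤ x, one has Ψ(x, y·(1 + 1/log x)) ≤ C·Ψ(x,y). -/
open scoped Classical

section SmoothAux
open Finset

/-- Count of `n ∈ [1,N]` all of whose prime factors satisfy `P`. -/
noncomputable def primePredCount (N : ℕ) (P : ℕ → Prop) : ℕ :=
  ((Finset.Icc 1 N).filter fun n => ∀ p : ℕ, p.Prime → p ∣ n → P p).card

lemma primePredCount_mono_N {N M : ℕ} (h : N ≤ M) (P : ℕ → Prop) :
    primePredCount N P ≤ primePredCount M P := by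
  apply Finset.card_le_card
  intro n hn
  simp only [Finset.mem_filter, Finset.mem_Icc] at hn ⊢
  exact ⟨⟨hn.1.1, hn.1.2.trans h⟩, hn.2⟩

lemma primePredCount_mono_P {N : ℕ} {P P' : ℕ → Prop}
    (h : ∀ p, p.Prime → p ≤ N → P p → P' p) :
    primePredCount N P ≤ primePredCount N P' := by
  apply Finset.card_le_card
  intro n hn
  simp only [Finset.mem_filter, Finset.mem_Icc] at hn ⊢
  refine ⟨hn.1, fun p pp hpn => ?_⟩
  have hn0 : 1 ≤ n := hn.1.1
  have hpN : p ≤ N := (Nat.le_of_dvd hn0 hpn).trans hn.1.2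
  exact h p pp hpN (hn.2 p pp hpn)

lemma primePredCount_congr {N : ℕ} {P P' : ℕ → Prop}
    (h : ∀ p, p.Prime → p ≤ N → (P p ↔ P' p)) :
    primePredCount N P = primePredCount N P' :=
  le_antisymm (primePredCount_mono_P fun p pp hp hP => (h p pp hp).1 hP)
    (primePredCount_mono_P fun p pp hp hP => (h p pp hp).2 hP)

/-- Multiplication by `q^k` embeds smooth numbers up to `N/q^k` into smooth
numbers up to `N` divisible by `q^k`. -/
lemma primePredCount_div_le {N q k : ℕ} {P : ℕ → Prop} (hq : q.Prime) (hPq : P q) :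
    primePredCount (N / q ^ k) P ≤
      ((Finset.Icc 1 N).filter fun n => (∀ p : ℕ, p.Prime → p ∣ n → P p) ∧ q ^ k ∣ n).card := by
  have hqk : 0 < q ^ k := pow_pos hq.pos k
  apply Finset.card_le_card_of_injOn (fun m => m * q ^ k)
  · intro m hm
    simp only [Finset.mem_coe, Finset.mem_filter, Finset.mem_Icc] at hm ⊢
    obtain ⟨⟨hm1, hm2⟩, hsm⟩ := hm
    refine ⟨⟨Nat.one_le_iff_ne_zero.2 (by positivity), (Nat.le_div_iff_mul_le hqk).1 hm2⟩,
      fun p pp hpd => ?_, ⟨m, mul_comm m _⟩⟩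
    rcases (Nat.Prime.dvd_mul pp).1 hpd with h | h
    · exact hsm p pp h
    · have hpq : p = q := (Nat.prime_dvd_prime_iff_eq pp hq).1 (pp.dvd_of_dvd_pow h)
      exact hpq ▸ hPq
  · intro a _ b _ hab
    exact Nat.eq_of_mul_eq_mul_right hqk hab

lemma primePredCount_insert_le {N p : ℕ} {P : ℕ → Prop} (hp : p.Prime) :
    primePredCount N (fun r => P r ∨ r = p) ≤
      ∑ k ∈ Finset.range (N + 1), primePredCount (N / p ^ k) P := by
  classical
  set A := (Finset.Icc 1 N).filter
    (fun n => ∀ r : ℕ, r.Prime → r ∣ n → P r ∨ r = p) with hA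
  have hfib : ∀ n ∈ A, n.factorization p ∈ Finset.range (N + 1) := by
    intro n hn
    simp only [hA, Finset.mem_filter, Finset.mem_Icc] at hn
    have hn0 : n ≠ 0 := by omega
    exact Finset.mem_range.2 (lt_of_lt_of_le (Nat.factorization_lt p hn0) (by omega))
  rw [primePredCount, Finset.card_eq_sum_card_fiberwise hfib]
  apply Finset.sum_le_sum
  intro k _
  apply Finset.card_le_card_of_injOn (fun n => n / p ^ k)
  · intro n hn
    simp only [Finset.mem_coe, hA, Finset.mem_filter, Finset.mem_Icc] at hn
    obtain ⟨⟨⟨hn1, hn2⟩, hsm⟩, hk⟩ := hn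
    have hn0 : n ≠ 0 := by omega
    have hdvd : p ^ k ∣ n := by
      rw [← hk]; exact Nat.ordProj_dvd n p
    simp only [Finset.mem_coe, Finset.mem_filter, Finset.mem_Icc]
    have hpos : 0 < n / p ^ k := Nat.div_pos (Nat.le_of_dvd (by omega) hdvd) (pow_pos hp.pos k)
    refine ⟨⟨hpos, Nat.div_le_div_right hn2⟩, fun r rr hrd => ?_⟩
    have hrn : r ∣ n := hrd.trans (Nat.div_dvd_of_dvd hdvd)
    rcases hsm r rr hrn with h | h
    · exact h
    · exfalso
      subst h
      rw [← hk] at hrd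
      exact Nat.not_dvd_ordCompl hp hn0 hrd
  · intro a ha b hb hab
    rw [Finset.mem_coe, Finset.mem_filter] at ha hb
    have ha' : p ^ k ∣ a := by rw [← ha.2]; exact Nat.ordProj_dvd a p
    have hb' : p ^ k ∣ b := by rw [← hb.2]; exact Nat.ordProj_dvd b p
    rw [← Nat.div_mul_cancel ha', ← Nat.div_mul_cancel hb']
    simp only at hab
    rw [hab]

lemma prod_pow_factorization_dvd (n : ℕ) (Qs : Finset ℕ)
    (hQ : ∀ q ∈ Qs, q.Prime) :
    (∏ q ∈ Qs, q ^ n.factorization q) ∣ n := by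
  classical
  induction Qs using Finset.induction_on with
  | empty => simp
  | @insert q s hq ih =>
    rw [Finset.prod_insert hq]
    have hqp : q.Prime := hQ q (Finset.mem_insert_self q s)
    have hsp : ∀ r ∈ s, r.Prime := fun r hr => hQ r (Finset.mem_insert_of_mem hr)
    have hcop : Nat.Coprime (q ^ n.factorization q) (∏ r ∈ s, r ^ n.factorization r) := by
      apply Nat.Coprime.pow_left
      apply Nat.Coprime.prod_right
      intro r hr
      apply Nat.Coprime.pow_right
      exact (Nat.coprime_primes hqp (hsp r hr)).2 (by rintro rfl; exact hq hr)
    exact hcop.mul_dvd_of_dvd_of_dvd (Nat.ordProj_dvd n q) (ih hsp)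

lemma sum_sum_div_le {N : ℕ} {P : ℕ → Prop} (Qs : Finset ℕ) (hQ : ∀ q ∈ Qs, q.Prime ∧ P q)
    (B : ℕ) (hB : ∀ n, 1 ≤ n → n ≤ N → (∑ q ∈ Qs, n.factorization q) ≤ B) :
    ∑ q ∈ Qs, ∑ k ∈ Finset.Icc 1 N, primePredCount (N / q ^ k) P ≤ B * primePredCount N P := by
  classical
  set A := (Finset.Icc 1 N).filter (fun n => ∀ p : ℕ, p.Prime → p ∣ n → P p) with hA
  have step1 : ∀ q ∈ Qs, ∀ k ∈ Finset.Icc 1 N,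
      primePredCount (N / q ^ k) P ≤ ∑ n ∈ A, if q ^ k ∣ n then 1 else 0 := by
    intro q hq k _
    rw [← Finset.sum_filter]
    calc primePredCount (N / q ^ k) P
        ≤ ((Finset.Icc 1 N).filter fun n =>
            (∀ p : ℕ, p.Prime → p ∣ n → P p) ∧ q ^ k ∣ n).card :=
          primePredCount_div_le (hQ q hq).1 (hQ q hq).2
      _ = (A.filter fun n => q ^ k ∣ n).card := by rw [hA, Finset.filter_filter]
      _ ≤ ∑ n ∈ A.filter (fun n => q ^ k ∣ n), 1 := by simp
  calc ∑ q ∈ Qs, ∑ k ∈ Finset.Icc 1 N, primePredCount (N / q ^ k) P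
      ≤ ∑ q ∈ Qs, ∑ k ∈ Finset.Icc 1 N, ∑ n ∈ A, if q ^ k ∣ n then 1 else 0 := by
        apply Finset.sum_le_sum; intro q hq
        exact Finset.sum_le_sum (step1 q hq)
    _ = ∑ q ∈ Qs, ∑ n ∈ A, ∑ k ∈ Finset.Icc 1 N, if q ^ k ∣ n then 1 else 0 :=
        Finset.sum_congr rfl fun q _ => Finset.sum_comm
    _ = ∑ n ∈ A, ∑ q ∈ Qs, ∑ k ∈ Finset.Icc 1 N, if q ^ k ∣ n then 1 else 0 :=
        Finset.sum_comm
    _ ≤ ∑ n ∈ A, B := by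
        apply Finset.sum_le_sum
        intro n hn
        simp only [hA, Finset.mem_filter, Finset.mem_Icc] at hn
        have hn0 : n ≠ 0 := by omega
        have inner : ∀ q ∈ Qs, (∑ k ∈ Finset.Icc 1 N, if q ^ k ∣ n then 1 else 0)
            ≤ n.factorization q := by
          intro q hq
          rw [← Finset.sum_filter, Finset.sum_const, smul_eq_mul, mul_one]
          have hsub : (Finset.Icc 1 N).filter (fun k => q ^ k ∣ n) ⊆
              Finset.Icc 1 (n.factorization q) := by
            intro k hk
            simp only [Finset.mem_filter, Finset.mem_Icc] at hk ⊢
            exact ⟨hk.1.1, (Nat.Prime.pow_dvd_iff_le_factorization (hQ q hq).1 hn0).1 hk.2⟩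
          calc ((Finset.Icc 1 N).filter (fun k => q ^ k ∣ n)).card
              ≤ (Finset.Icc 1 (n.factorization q)).card := Finset.card_le_card hsub
            _ = n.factorization q := by rw [Nat.card_Icc]; omega
        calc (∑ q ∈ Qs, ∑ k ∈ Finset.Icc 1 N, if q ^ k ∣ n then 1 else 0)
            ≤ ∑ q ∈ Qs, n.factorization q := Finset.sum_le_sum inner
          _ ≤ B := hB n hn.1.1 hn.1.2
    _ = B * primePredCount N P := by
        rw [Finset.sum_const, smul_eq_mul, mul_comm]; rfl

lemma primePredCount_step {N p B : ℕ} {P : ℕ → Prop} (Qs : Finset ℕ) (hp : p.Prime)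
    (hQ : ∀ q ∈ Qs, q.Prime ∧ P q ∧ q < p)
    (hB : ∀ n, 1 ≤ n → n ≤ N → (∑ q ∈ Qs, n.factorization q) ≤ B)
    (hQpos : 0 < Qs.card) :
    (primePredCount N (fun r => P r ∨ r = p) : ℝ) ≤
      (1 + (B : ℝ) / Qs.card) * primePredCount N P := by
  have hsplit : ∑ k ∈ Finset.range (N + 1), primePredCount (N / p ^ k) P =
      primePredCount N P + ∑ k ∈ Finset.Icc 1 N, primePredCount (N / p ^ k) P := by
    have e1 : ∑ k ∈ Finset.Ico 0 1, primePredCount (N / p ^ k) P = primePredCount N P := by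
      simp
    rw [Finset.range_eq_Ico, ← Finset.sum_Ico_consecutive _ (Nat.zero_le 1) (by omega), e1,
      Finset.Ico_add_one_right_eq_Icc]
  set T := ∑ k ∈ Finset.Icc 1 N, primePredCount (N / p ^ k) P with hT
  have h1 : primePredCount N (fun r => P r ∨ r = p) ≤ primePredCount N P + T := by
    rw [← hsplit]; exact primePredCount_insert_le hp
  have h2 : Qs.card * T ≤ B * primePredCount N P := by
    calc Qs.card * T = ∑ _q ∈ Qs, T := by rw [Finset.sum_const, smul_eq_mul]
      _ ≤ ∑ q ∈ Qs, ∑ k ∈ Finset.Icc 1 N, primePredCount (N / q ^ k) P := by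
          apply Finset.sum_le_sum
          intro q hq
          apply Finset.sum_le_sum
          intro k _
          apply primePredCount_mono_N
          apply Nat.div_le_div_left
          · exact Nat.pow_le_pow_left (le_of_lt (hQ q hq).2.2) k
          · exact pow_pos (hQ q hq).1.pos k
      _ ≤ B * primePredCount N P := sum_sum_div_le Qs (fun q hq => ⟨(hQ q hq).1, (hQ q hq).2.1⟩)
            B hB
  have hQR : (0 : ℝ) < (Qs.card : ℝ) := by exact_mod_cast hQpos
  have h2R : (T : ℝ) ≤ (B : ℝ) / Qs.card * primePredCount N P := by
    rw [div_mul_eq_mul_div, le_div_iff₀ hQR]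
    calc (T : ℝ) * Qs.card = ((Qs.card * T : ℕ) : ℝ) := by push_cast; ring
      _ ≤ ((B * primePredCount N P : ℕ) : ℝ) := by exact_mod_cast h2
      _ = (B : ℝ) * primePredCount N P := by push_cast; ring
  calc (primePredCount N (fun r => P r ∨ r = p) : ℝ)
      ≤ (primePredCount N P : ℝ) + T := by exact_mod_cast h1
    _ ≤ (primePredCount N P : ℝ) + (B : ℝ) / Qs.card * primePredCount N P := by linarith
    _ = (1 + (B : ℝ) / Qs.card) * primePredCount N P := by ring

lemma primePredCount_finset_le {N B : ℕ} {y : ℝ} (Qs : Finset ℕ)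
    (hQ : ∀ q ∈ Qs, q.Prime ∧ (q : ℝ) ≤ y)
    (hB : ∀ n, 1 ≤ n → n ≤ N → (∑ q ∈ Qs, n.factorization q) ≤ B)
    (hQpos : 0 < Qs.card)
    (F : Finset ℕ) (hF : ∀ r ∈ F, r.Prime ∧ y < (r : ℝ)) :
    (primePredCount N (fun r => (r : ℝ) ≤ y ∨ r ∈ F) : ℝ) ≤
      (1 + (B : ℝ) / Qs.card) ^ F.card * primePredCount N (fun r => (r : ℝ) ≤ y) := by
  classical
  induction F using Finset.induction_on with
  | empty =>
    rw [primePredCount_congr (P' := fun r => (r : ℝ) ≤ y) (fun p _ _ => by simp)]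
    simp
  | @insert p F hpF ih =>
    have hp : p.Prime := (hF p (Finset.mem_insert_self p F)).1
    have hyp : y < (p : ℝ) := (hF p (Finset.mem_insert_self p F)).2
    have hF' : ∀ r ∈ F, r.Prime ∧ y < (r : ℝ) := fun r hr => hF r (Finset.mem_insert_of_mem hr)
    have e : primePredCount N (fun r => (r : ℝ) ≤ y ∨ r ∈ insert p F) =
        primePredCount N (fun r => ((r : ℝ) ≤ y ∨ r ∈ F) ∨ r = p) := by
      apply primePredCount_congr
      intro r _ _
      simp only [Finset.mem_insert]
      tauto
    have hQ' : ∀ q ∈ Qs, q.Prime ∧ ((q : ℝ) ≤ y ∨ q ∈ F) ∧ q < p := by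
      intro q hq
      refine ⟨(hQ q hq).1, Or.inl (hQ q hq).2, ?_⟩
      exact_mod_cast lt_of_le_of_lt (hQ q hq).2 hyp
    have hone : (0 : ℝ) ≤ 1 + (B : ℝ) / Qs.card := by positivity
    calc (primePredCount N (fun r => (r : ℝ) ≤ y ∨ r ∈ insert p F) : ℝ)
        = primePredCount N (fun r => ((r : ℝ) ≤ y ∨ r ∈ F) ∨ r = p) := by rw [e]
      _ ≤ (1 + (B : ℝ) / Qs.card) * primePredCount N (fun r => (r : ℝ) ≤ y ∨ r ∈ F) :=
          primePredCount_step Qs hp hQ' hB hQpos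
      _ ≤ (1 + (B : ℝ) / Qs.card) *
          ((1 + (B : ℝ) / Qs.card) ^ F.card * primePredCount N (fun r => (r : ℝ) ≤ y)) :=
          mul_le_mul_of_nonneg_left (ih hF') hone
      _ = (1 + (B : ℝ) / Qs.card) ^ (insert p F).card *
          primePredCount N (fun r => (r : ℝ) ≤ y) := by
          rw [Finset.card_insert_of_notMem hpF, pow_succ]
          ring

lemma primes_part2 {y : ℝ} (hy0 : (0:ℝ) < y) (hy8 : (100000000 : ℝ) ≤ y)
    (hLy : (27:ℝ) ≤ Real.log y)
    {P' Q S mR : ℝ}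
    (hkey : mR * Real.log 4 ≤ Real.log y + P' * Real.log y)
    (hm : (y - 2)/2 ≤ mR)
    (hQ : P' - S ≤ Q) (hQ0 : (0:ℝ) ≤ Q)
    (hS : S ≤ Real.sqrt y + 1) (hP0 : (0:ℝ) ≤ P') :
    y / (100 * Real.log y) ≤ Q := by
  set L := Real.log y with hL
  set s := Real.sqrt y with hs
  set t := Real.sqrt s with ht
  have hs0 : (0:ℝ) ≤ s := Real.sqrt_nonneg y
  have ht0 : (0:ℝ) ≤ t := Real.sqrt_nonneg s
  have hsy : s ^ 2 = y := Real.sq_sqrt hy0.le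
  have hts : t ^ 2 = s := Real.sq_sqrt hs0
  have hs4 : (10000 : ℝ) ≤ s := by
    rw [hs]
    have : (10000 : ℝ) = Real.sqrt (10000 ^ 2) := by
      rw [Real.sqrt_sq (by norm_num)]
    rw [this]
    apply Real.sqrt_le_sqrt
    norm_num
    linarith
  have ht10 : (10 : ℝ) ≤ t := by
    rw [ht]
    have : (10 : ℝ) = Real.sqrt (10 ^ 2) := by rw [Real.sqrt_sq (by norm_num)]
    rw [this]
    apply Real.sqrt_le_sqrt
    norm_num
    linarith
  have hL4t : L ≤ 4 * t := by
    have h1 : L = 2 * Real.log s := by rw [hL, hs, Real.log_sqrt hy0.le]; ring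
    have h2 : Real.log s = 2 * Real.log t := by rw [ht, Real.log_sqrt hs0]; ring
    have h3 : Real.log t ≤ t - 1 := Real.log_le_sub_one_of_pos (by linarith)
    rw [h1, h2]; linarith
  have hlog4 : (1.38 : ℝ) ≤ Real.log 4 := by
    have : (4:ℝ) = 2 ^ 2 := by norm_num
    rw [this, Real.log_pow]
    push_cast
    linarith [Real.log_two_gt_d9]
  have hL0 : (0:ℝ) < L := by linarith
  rw [div_le_iff₀ (by positivity)]
  have hPL : 1.38 * ((y - 2)/2) - L ≤ P' * L := by
    have h1 : 1.38 * ((y - 2)/2) ≤ mR * Real.log 4 := by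
      have := mul_le_mul hm hlog4 (by norm_num) (by linarith)
      linarith
    linarith [hkey]
  have hQge : P' - s - 1 ≤ Q := by linarith
  have hyt : y = t ^ 4 := by
    rw [← hsy, ← hts]; ring
  nlinarith [mul_le_mul_of_nonneg_right hQge hL0.le, mul_le_mul_of_nonneg_right hL4t hs0,
    mul_le_mul_of_nonneg_right ht10 (by positivity : (0:ℝ) ≤ t^3),
    mul_le_mul_of_nonneg_right ht10 (by positivity : (0:ℝ) ≤ t^2), sq_nonneg t, sq_nonneg (t-10)]

/-- Chebyshev-type lower bound: the number of primes in `(√y, y]` is at least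
`y / (100 log y)`, for `y ≥ e^27`. -/
lemma primes_in_interval_lb {y : ℝ} (hy : Real.exp 27 ≤ y) :
    y / (100 * Real.log y) ≤
      (((Finset.range (⌊y⌋₊ + 1)).filter fun q : ℕ =>
        q.Prime ∧ Real.sqrt y < (q : ℝ) ∧ (q : ℝ) ≤ y).card : ℝ) := by
  have hy8 : (100000000 : ℝ) ≤ y := by
    refine le_trans ?_ hy
    calc (100000000 : ℝ) ≤ 2 ^ 27 := by norm_num
      _ ≤ Real.exp 1 ^ 27 := by
          apply pow_le_pow_left₀ (by norm_num)
          linarith [Real.add_one_le_exp (1 : ℝ)]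
      _ = Real.exp 27 := by
          rw [← Real.exp_nat_mul]; norm_num
  have hy0 : (0 : ℝ) < y := by linarith
  have hLy : (27 : ℝ) ≤ Real.log y := by
    rw [← Real.log_exp 27]
    exact Real.log_le_log (Real.exp_pos 27) hy
  have hfloor : (100000000 : ℕ) ≤ ⌊y⌋₊ := by
    have := Nat.le_floor (α := ℝ) (n := 100000000) (by exact_mod_cast hy8)
    exact_mod_cast this
  set m : ℕ := ⌊y⌋₊ / 2 with hm
  have hm4 : 4 ≤ m := by omega
  have h2my : ((2 * m : ℕ) : ℝ) ≤ y := by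
    have : (2 * m : ℕ) ≤ ⌊y⌋₊ := by omega
    calc ((2 * m : ℕ) : ℝ) ≤ (⌊y⌋₊ : ℝ) := by exact_mod_cast this
      _ ≤ y := Nat.floor_le hy0.le
  have h2my' : y - 2 ≤ ((2 * m : ℕ) : ℝ) := by
    have h1 : (⌊y⌋₊ : ℝ) > y - 1 := by
      have := Nat.lt_floor_add_one y
      linarith
    have h2 : (2 * m : ℕ) + 1 ≥ ⌊y⌋₊ := by omega
    have h3 : ((2 * m : ℕ) : ℝ) + 1 ≥ (⌊y⌋₊ : ℝ) := by exact_mod_cast h2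
    linarith
  set cb : ℕ := Nat.centralBinom m with hcb
  have hcb0 : cb ≠ 0 := Nat.centralBinom_ne_zero m
  set pf : Finset ℕ := cb.primeFactors with hpf
  -- cb ≤ (2m) ^ pf.card
  have hcble : cb ≤ (2 * m) ^ pf.card := by
    have hprod : ∏ p ∈ pf, p ^ cb.factorization p = cb := by
      rw [hpf, ← Nat.prod_factorization_eq_prod_primeFactors]
      exact Nat.factorization_prod_pow_eq_self hcb0
    calc cb = ∏ p ∈ pf, p ^ cb.factorization p := hprod.symm
      _ ≤ ∏ _p ∈ pf, (2 * m) := by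
          apply Finset.prod_le_prod'
          intro p _
          exact Nat.pow_factorization_choose_le (by omega)
      _ = (2 * m) ^ pf.card := by rw [Finset.prod_const]
  have h4 : 4 ^ m < m * cb := Nat.four_pow_lt_mul_centralBinom m hm4
  -- real log bound
  have hkey : (m : ℝ) * Real.log 4 ≤ Real.log m + (pf.card : ℝ) * Real.log (2 * m) := by
    have h5 : (4 : ℕ) ^ m ≤ m * (2 * m) ^ pf.card :=
      le_trans h4.le (Nat.mul_le_mul_left m hcble)
    have h5R : (4 : ℝ) ^ m ≤ (m : ℝ) * ((2 * m : ℕ) : ℝ) ^ pf.card := by exact_mod_cast h5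
    have hm0 : (0 : ℝ) < (m : ℝ) := by positivity
    have h2m0 : (0 : ℝ) < ((2 * m : ℕ) : ℝ) := by positivity
    have := Real.log_le_log (by positivity) h5R
    rw [Real.log_pow, Real.log_mul (ne_of_gt hm0) (by positivity), Real.log_pow] at this
    push_cast at this ⊢
    linarith
  -- assemble
  set Qs := ((Finset.range (⌊y⌋₊ + 1)).filter fun q : ℕ =>
        q.Prime ∧ Real.sqrt y < (q : ℝ) ∧ (q : ℝ) ≤ y) with hQs
  set Sbig := pf.filter (fun q : ℕ => Real.sqrt y < (q : ℝ)) with hSbig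
  set Ssmall := pf.filter (fun q : ℕ => ¬ Real.sqrt y < (q : ℝ)) with hSsmall
  have hcardsplit : Sbig.card + Ssmall.card = pf.card :=
    Finset.card_filter_add_card_filter_not _
  have hq2m : ∀ q ∈ pf, q ≤ 2 * m := by
    intro q hq
    have hv : cb.factorization q ≠ 0 := by
      rw [hpf, ← Nat.support_factorization] at hq
      exact Finsupp.mem_support_iff.1 hq
    calc q ≤ q ^ cb.factorization q := Nat.le_self_pow hv q
      _ ≤ 2 * m := Nat.pow_factorization_choose_le (by omega)
  have hsub : Sbig ⊆ Qs := by
    intro q hq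
    rw [hSbig, Finset.mem_filter] at hq
    obtain ⟨hqpf, hqbig⟩ := hq
    have hqp : q.Prime := Nat.prime_of_mem_primeFactors hqpf
    have hq2m' : q ≤ 2 * m := hq2m q hqpf
    have hqy : (q : ℝ) ≤ y := le_trans (by exact_mod_cast hq2m') h2my
    rw [hQs, Finset.mem_filter, Finset.mem_range]
    exact ⟨by omega, hqp, hqbig, hqy⟩
  have hQge : (pf.card : ℝ) - Ssmall.card ≤ Qs.card := by
    have h1 : Sbig.card ≤ Qs.card := Finset.card_le_card hsub
    have h2 : (Sbig.card : ℝ) + Ssmall.card = pf.card := by exact_mod_cast hcardsplit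
    have h3 : (Sbig.card : ℝ) ≤ Qs.card := by exact_mod_cast h1
    linarith
  have hSsmall_le : (Ssmall.card : ℝ) ≤ Real.sqrt y + 1 := by
    have hsub2 : Ssmall ⊆ Finset.range (⌊Real.sqrt y⌋₊ + 1) := by
      intro q hq
      rw [hSsmall, Finset.mem_filter] at hq
      have : (q : ℝ) ≤ Real.sqrt y := le_of_not_gt hq.2
      rw [Finset.mem_range]
      exact Nat.lt_succ_of_le (Nat.le_floor this)
    calc (Ssmall.card : ℝ) ≤ ((⌊Real.sqrt y⌋₊ + 1 : ℕ) : ℝ) := by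
          exact_mod_cast (Finset.card_le_card hsub2).trans_eq (Finset.card_range _)
      _ ≤ Real.sqrt y + 1 := by
          push_cast
          have := Nat.floor_le (Real.sqrt_nonneg y)
          linarith
  have hkey2 : (m : ℝ) * Real.log 4 ≤ Real.log y + (pf.card : ℝ) * Real.log y := by
    have hm1 : (1 : ℝ) ≤ (m : ℝ) := by
      have : 1 ≤ m := by omega
      exact_mod_cast this
    have hlogm : Real.log m ≤ Real.log y := Real.log_le_log (by linarith) (by
      have : ((m:ℕ) : ℝ) ≤ ((2*m : ℕ) : ℝ) := by push_cast; linarith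
      linarith [h2my])
    have hlog2m : Real.log (2 * (m:ℝ)) ≤ Real.log y := by
      apply Real.log_le_log (by linarith)
      have : ((2*m : ℕ) : ℝ) = 2 * (m:ℝ) := by push_cast; ring
      linarith [h2my]
    have hP0 : (0:ℝ) ≤ (pf.card : ℝ) := by positivity
    calc (m : ℝ) * Real.log 4 ≤ Real.log m + (pf.card : ℝ) * Real.log (2 * (m:ℝ)) := hkey
      _ ≤ Real.log y + (pf.card : ℝ) * Real.log y := by
          have := mul_le_mul_of_nonneg_left hlog2m hP0
          linarith
  have hcast : ((2*m : ℕ) : ℝ) = 2 * (m:ℝ) := by push_cast; ring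
  exact primes_part2 hy0 hy8 hLy hkey2 (by rw [hcast] at h2my'; linarith : (y-2)/2 ≤ (m:ℝ)) hQge
    (by positivity) hSsmall_le (by positivity)

lemma smoothCount_eq (x y : ℝ) :
    smoothCount x y = primePredCount ⌊x⌋₊ (fun p => (p : ℝ) ≤ y) := rfl

end SmoothAux

/-- **Local stability of `Ψ(x,y)` in the `y`-aspect (Smooth Numbers Result 2).**
There is an absolute `C > 0` such that for all sufficiently large `x` and all
`log x ≤ y ≤ x`, one has `Ψ(x, y(1 + 1/log x)) ≤ C Ψ(x,y)`. -/
theorem smoothCount_y_stability :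
    ∃ C : ℝ, 0 < C ∧
      ∃ x₀ : ℝ, ∀ x y : ℝ,
        x₀ ≤ x → Real.log x ≤ y → y ≤ x →
        (smoothCount x (y * (1 + 1 / Real.log x)) : ℝ) ≤ C * (smoothCount x y : ℝ) := by
  refine ⟨Real.exp 400, Real.exp_pos 400, Real.exp (Real.exp 27), fun x y hx hyx hxy => ?_⟩
  -- basic facts
  have hx1 : (1 : ℝ) < x := lt_of_lt_of_le (by
    calc (1:ℝ) < 1 + Real.exp 27 := by linarith [Real.exp_pos 27]
      _ ≤ Real.exp (Real.exp 27) := Real.add_one_le_exp _ |>.trans_eq' (by ring)) hx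
  have hx0 : (0 : ℝ) < x := by linarith
  set L := Real.log x with hL
  have hL27 : Real.exp 27 ≤ L := by
    rw [hL, ← Real.log_exp (Real.exp 27)]
    exact Real.log_le_log (Real.exp_pos _) hx
  have hLbig : (27 : ℝ) ≤ L := le_trans (by linarith [Real.add_one_le_exp (27:ℝ)]) hL27
  have hL0 : (0 : ℝ) < L := by linarith
  have hy27 : Real.exp 27 ≤ y := le_trans hL27 hyx
  have hy0 : (0 : ℝ) < y := lt_of_lt_of_le (Real.exp_pos 27) hy27
  have hy1 : (1 : ℝ) < y := by nlinarith [Real.add_one_le_exp (27:ℝ)]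
  have hlogy : (27 : ℝ) ≤ Real.log y := by
    rw [← Real.log_exp 27]; exact Real.log_le_log (Real.exp_pos _) hy27
  have hlogy0 : (0 : ℝ) < Real.log y := by linarith
  have hlogyL : Real.log y ≤ L := Real.log_le_log hy0 hxy
  set N := ⌊x⌋₊ with hN
  have hN1 : 1 ≤ N := Nat.le_floor (by exact_mod_cast hx1.le)
  have hNx : (N : ℝ) ≤ x := Nat.floor_le hx0.le
  set y' := y * (1 + 1 / L) with hy'
  have hyy' : y ≤ y' := by
    rw [hy']
    nlinarith [mul_pos hy0 (one_div_pos.mpr hL0)]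
  -- the prime reservoir Qs
  set Qs := ((Finset.range (⌊y⌋₊ + 1)).filter fun q : ℕ =>
    q.Prime ∧ Real.sqrt y < (q : ℝ) ∧ (q : ℝ) ≤ y) with hQs
  have hQlb : y / (100 * Real.log y) ≤ (Qs.card : ℝ) := primes_in_interval_lb hy27
  have hQR0 : (0 : ℝ) < (Qs.card : ℝ) := lt_of_lt_of_le (by positivity) hQlb
  have hQpos : 0 < Qs.card := by exact_mod_cast hQR0
  have hQprop : ∀ q ∈ Qs, q.Prime ∧ (q : ℝ) ≤ y := by
    intro q hq
    rw [hQs, Finset.mem_filter] at hq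
    exact ⟨hq.2.1, hq.2.2.2⟩
  -- the bound B on the number of large prime factors
  set B := ⌊2 * L / Real.log y⌋₊ with hB
  have hBub : (B : ℝ) ≤ 2 * L / Real.log y := Nat.floor_le (by positivity)
  have hBbound : ∀ n, 1 ≤ n → n ≤ N → (∑ q ∈ Qs, n.factorization q) ≤ B := by
    intro n hn1 hnN
    have hn0 : n ≠ 0 := by omega
    have hd : (∏ q ∈ Qs, q ^ n.factorization q) ∣ n :=
      prod_pow_factorization_dvd n Qs (fun q hq => (hQprop q hq).1)
    have hdn : (∏ q ∈ Qs, q ^ n.factorization q) ≤ n := Nat.le_of_dvd (by omega) hd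
    set S := ∑ q ∈ Qs, n.factorization q with hS
    have hsqrt1 : (1 : ℝ) < Real.sqrt y := by
      rw [show (1:ℝ) = Real.sqrt 1 by simp]
      exact Real.sqrt_lt_sqrt (by norm_num) hy1
    have hpow : Real.sqrt y ^ S ≤ (x : ℝ) := by
      calc Real.sqrt y ^ S = ∏ q ∈ Qs, Real.sqrt y ^ n.factorization q := by
            rw [Finset.prod_pow_eq_pow_sum]
        _ ≤ ∏ q ∈ Qs, (q : ℝ) ^ n.factorization q := by
            apply Finset.prod_le_prod
            · intro q _; positivity
            · intro q hq
              apply pow_le_pow_left₀ (Real.sqrt_nonneg y)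
              rw [hQs, Finset.mem_filter] at hq
              exact hq.2.2.1.le
        _ = ((∏ q ∈ Qs, q ^ n.factorization q : ℕ) : ℝ) := by push_cast; ring
        _ ≤ (n : ℝ) := by exact_mod_cast hdn
        _ ≤ (N : ℝ) := by exact_mod_cast hnN
        _ ≤ x := hNx
    have hlog : (S : ℝ) * (Real.log y / 2) ≤ L := by
      have := Real.log_le_log (by positivity) hpow
      rw [Real.log_pow, Real.log_sqrt hy0.le] at this
      exact this.trans_eq rfl
    apply Nat.le_floor
    rw [le_div_iff₀ hlogy0]
    linarith
  -- the set E of new primes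
  set E := ((Finset.range (N + 1)).filter fun p : ℕ =>
    p.Prime ∧ y < (p : ℝ) ∧ (p : ℝ) ≤ y') with hE
  have hEprop : ∀ p ∈ E, p.Prime ∧ y < (p : ℝ) := by
    intro p hp
    rw [hE, Finset.mem_filter] at hp
    exact ⟨hp.2.1, hp.2.2.1⟩
  -- smoothCount x y' ≤ primePredCount N (≤ y ∨ ∈ E)
  have hstep0 : smoothCount x y' ≤ primePredCount N (fun r => (r : ℝ) ≤ y ∨ r ∈ E) := by
    rw [smoothCount_eq]
    apply primePredCount_mono_P
    intro p pp hpN hpy'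
    by_cases hcase : (p : ℝ) ≤ y
    · exact Or.inl hcase
    · push_neg at hcase
      refine Or.inr ?_
      rw [hE, Finset.mem_filter, Finset.mem_range]
      exact ⟨by omega, pp, hcase, hpy'⟩
  -- main inequality
  have hmain : (primePredCount N (fun r => (r : ℝ) ≤ y ∨ r ∈ E) : ℝ) ≤
      (1 + (B : ℝ) / Qs.card) ^ E.card * primePredCount N (fun r => (r : ℝ) ≤ y) :=
    primePredCount_finset_le Qs hQprop hBbound hQpos E hEprop
  -- bound on E.card
  have hEcard : (E.card : ℝ) ≤ y / L + 1 := by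
    have hsub : E ⊆ Finset.Ioc ⌊y⌋₊ ⌊y'⌋₊ := by
      intro p hp
      rw [hE, Finset.mem_filter] at hp
      obtain ⟨-, -, hp1, hp2⟩ := hp
      rw [Finset.mem_Ioc]
      constructor
      · have : (⌊y⌋₊ : ℝ) < (p : ℝ) := lt_of_le_of_lt (Nat.floor_le hy0.le) hp1
        exact_mod_cast this
      · exact Nat.le_floor hp2
    have h1 : E.card ≤ ⌊y'⌋₊ - ⌊y⌋₊ := by
      calc E.card ≤ (Finset.Ioc ⌊y⌋₊ ⌊y'⌋₊).card := Finset.card_le_card hsub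
        _ = ⌊y'⌋₊ - ⌊y⌋₊ := Nat.card_Ioc _ _
    have hfm : ⌊y⌋₊ ≤ ⌊y'⌋₊ := Nat.floor_le_floor hyy'
    have h2 : ((⌊y'⌋₊ - ⌊y⌋₊ : ℕ) : ℝ) = (⌊y'⌋₊ : ℝ) - (⌊y⌋₊ : ℝ) := by
      exact Nat.cast_sub hfm
    have h3 : (⌊y'⌋₊ : ℝ) ≤ y' := Nat.floor_le (le_trans hy0.le hyy')
    have h4 : y - 1 ≤ (⌊y⌋₊ : ℝ) := by
      have := Nat.lt_floor_add_one y
      linarith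
    have h5 : y' - y = y / L := by rw [hy']; field_simp; ring
    calc (E.card : ℝ) ≤ ((⌊y'⌋₊ - ⌊y⌋₊ : ℕ) : ℝ) := by exact_mod_cast h1
      _ = (⌊y'⌋₊ : ℝ) - (⌊y⌋₊ : ℝ) := h2
      _ ≤ y' - (y - 1) := by linarith
      _ = y / L + 1 := by linarith
  -- bound the factor
  have hfactor : (1 + (B : ℝ) / Qs.card) ^ E.card ≤ Real.exp 400 := by
    have h0 : (0 : ℝ) ≤ (B : ℝ) / Qs.card := div_nonneg (Nat.cast_nonneg _) (Nat.cast_nonneg _)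
    have h1 : (1 + (B : ℝ) / Qs.card) ^ E.card ≤ Real.exp ((B : ℝ) / Qs.card) ^ E.card := by
      apply pow_le_pow_left₀ (by linarith)
      linarith [Real.add_one_le_exp ((B : ℝ) / Qs.card)]
    have h2 : Real.exp ((B : ℝ) / Qs.card) ^ E.card =
        Real.exp ((E.card : ℝ) * ((B : ℝ) / Qs.card)) := by
      rw [← Real.exp_nat_mul]
    have h3 : (B : ℝ) / Qs.card ≤ 200 * L / y := by
      have hq : (0 : ℝ) < y / (100 * Real.log y) := by positivity
      calc (B : ℝ) / Qs.card ≤ (2 * L / Real.log y) / (y / (100 * Real.log y)) := by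
            apply div_le_div₀ (by positivity) hBub hq hQlb
        _ = 200 * L / y := by field_simp; ring
    have h4 : (E.card : ℝ) * ((B : ℝ) / Qs.card) ≤ 400 := by
      have hE2 : (E.card : ℝ) ≤ 2 * y / L := by
        have : (1 : ℝ) ≤ y / L := by rw [le_div_iff₀ hL0]; linarith
        calc (E.card : ℝ) ≤ y / L + 1 := hEcard
          _ ≤ y / L + y / L := by linarith
          _ = 2 * y / L := by ring
      calc (E.card : ℝ) * ((B : ℝ) / Qs.card) ≤ (2 * y / L) * (200 * L / y) := by
            apply mul_le_mul hE2 h3 h0 (by positivity : (0:ℝ) ≤ 2 * y / L)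
        _ = 400 := by field_simp; ring
    calc (1 + (B : ℝ) / Qs.card) ^ E.card ≤ Real.exp ((B : ℝ) / Qs.card) ^ E.card := h1
      _ = Real.exp ((E.card : ℝ) * ((B : ℝ) / Qs.card)) := h2
      _ ≤ Real.exp 400 := Real.exp_le_exp.2 h4
  -- finish
  have hfin : (smoothCount x y' : ℝ) ≤ Real.exp 400 * (smoothCount x y : ℝ) := by
    have hS0 : (0 : ℝ) ≤ (primePredCount N (fun r => (r : ℝ) ≤ y) : ℝ) := Nat.cast_nonneg _
    calc (smoothCount x y' : ℝ)
        ≤ (primePredCount N (fun r => (r : ℝ) ≤ y ∨ r ∈ E) : ℝ) := by exact_mod_cast hstep0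
      _ ≤ (1 + (B : ℝ) / Qs.card) ^ E.card * primePredCount N (fun r => (r : ℝ) ≤ y) := hmain
      _ ≤ Real.exp 400 * primePredCount N (fun r => (r : ℝ) ≤ y) :=
          mul_le_mul_of_nonneg_right hfactor hS0
      _ = Real.exp 400 * (smoothCount x y : ℝ) := by rw [smoothCount_eq]
  exact hfin
end

section
/- Let χ be a Dirichlet character to modulus q and χ₀ the principal character mod q. Then for every y ≥ 2, every α with 0 < α ≤ 1, and every real t: |∏_{p ≤ y} (1 − χ(p)·p^{−α−it})^{−1}| ≤ ( ∏_{p ≤ y} (1 − χ₀(p)·p^{−α})^{−1} ) · exp( − ∑_{p ≤ y, p ∤ q} (1 − Re(χ(p)·p^{−it}))/p^α ). -/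
open scoped Classical

lemma keyA : ∀ s ∈ Set.Icc (0:ℝ) 1, (1-s) * Real.exp (2*s) ≤ 1 + s := by
  have hmono : MonotoneOn (fun s : ℝ => 1 + s - (1-s) * Real.exp (2*s)) (Set.Icc 0 1) := by
    have hderiv : ∀ x : ℝ, HasDerivAt (fun s : ℝ => 1 + s - (1-s) * Real.exp (2*s))
        (1 - (1 - 2*x) * Real.exp (2*x)) x := by
      intro x
      have h1 : HasDerivAt (fun s : ℝ => (1-s) * Real.exp (2*s))
          ((-1) * Real.exp (2*x) + (1-x) * (Real.exp (2*x) * 2)) x := by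
        exact (HasDerivAt.const_sub 1 (hasDerivAt_id x)).mul
          ((Real.hasDerivAt_exp (2*x)).comp x (by simpa using (hasDerivAt_id x).const_mul 2))
      have h2 : HasDerivAt (fun s : ℝ => 1 + s) 1 x := by
        simpa using (hasDerivAt_id x).const_add 1
      have := h2.sub h1
      exact this.congr_deriv (by ring)
    apply monotoneOn_of_deriv_nonneg (convex_Icc 0 1)
    · exact Continuous.continuousOn (by continuity)
    · intro x hx
      exact (hderiv x).differentiableAt.differentiableWithinAt
    · intro x hx
      rw [(hderiv x).deriv]
      have h := Real.add_one_le_exp (-(2*x))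
      have hpos := Real.exp_pos (2*x)
      have hmul : Real.exp (-(2*x)) * Real.exp (2*x) = 1 := by
        rw [← Real.exp_add]; simp
      nlinarith
  intro s hs
  have h0 : (fun s : ℝ => 1 + s - (1-s) * Real.exp (2*s)) 0 ≤
      (fun s : ℝ => 1 + s - (1-s) * Real.exp (2*s)) s :=
    hmono (Set.mem_Icc.mpr ⟨le_refl 0, zero_le_one⟩) hs hs.1
  norm_num at h0
  nlinarith

lemma keyB {r u : ℝ} (hr0 : 0 ≤ r) (hr1 : r ≤ 1) (hu0 : 0 ≤ u) (hu2 : u ≤ 2) :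
    (1-r) * Real.exp (r*u) ≤ 1 - r + r*u := by
  have hconv := convexOn_exp.2 (Set.mem_univ (2*r)) (Set.mem_univ 0)
    (by linarith : (0:ℝ) ≤ u/2) (by linarith : (0:ℝ) ≤ 1 - u/2) (by ring)
  simp only [smul_eq_mul, mul_zero, add_zero, Real.exp_zero] at hconv
  have hrw : u/2 * (2*r) = r * u := by ring
  rw [hrw] at hconv
  have hA := keyA r (Set.mem_Icc.mpr ⟨hr0, hr1⟩)
  have he : 0 ≤ Real.exp (2*r) := (Real.exp_pos _).le
  nlinarith [Real.exp_pos (r*u)]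

lemma keyC {q : ℕ} (χ : DirichletCharacter ℂ q) {p : ℕ} (hp : p.Prime) (α t : ℝ)
    (hα0 : 0 < α) :
    ‖(1 - χ p * (p:ℂ) ^ (-(α:ℂ) - (t:ℂ)*Complex.I))⁻¹‖ ≤
    ‖(1 - (1 : DirichletCharacter ℂ q) p * (p:ℂ) ^ (-(α:ℂ)))⁻¹‖ *
      Real.exp (-(if p ∣ q then 0 else
        (1 - (χ p * (p:ℂ) ^ (-(t:ℂ)*Complex.I)).re) / (p:ℝ)^α)) := by
  have hp0 : (0:ℝ) < p := by exact_mod_cast hp.pos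
  have hp1 : (1:ℝ) < p := by exact_mod_cast hp.one_lt
  set r : ℝ := (p:ℝ) ^ (-α) with hrdef
  have hr0 : 0 < r := Real.rpow_pos_of_pos hp0 _
  have hr1 : r < 1 := Real.rpow_lt_one_of_one_lt_of_neg hp1 (by linarith)
  have hcastα : (p:ℂ) ^ (-(α:ℂ)) = (r:ℂ) := by
    rw [hrdef]
    have := Complex.ofReal_cpow hp0.le (-α)
    push_cast at this ⊢
    rw [this]
  by_cases hdvd : p ∣ q
  · have hnu : ¬ IsUnit (p : ZMod q) := by
      rw [ZMod.isUnit_prime_iff_not_dvd hp]; simpa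
    simp [χ.map_nonunit hnu, MulChar.map_nonunit _ hnu, hdvd]
  · have hu : IsUnit (p : ZMod q) := (ZMod.isUnit_prime_iff_not_dvd hp).mpr hdvd
    set w : ℂ := χ p * (p:ℂ) ^ (-(t:ℂ)*Complex.I) with hwdef
    have hχ1 : ‖χ p‖ = 1 := by
      rw [← hu.unit_spec]
      exact χ.unit_norm_eq_one hu.unit
    have hcp : ‖(p:ℂ) ^ (-(t:ℂ)*Complex.I)‖ = 1 := by
      have : ‖(((p:ℝ):ℂ) ^ (-(t:ℂ)*Complex.I))‖ = (p:ℝ) ^ ((-(t:ℂ)*Complex.I).re) :=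
        Complex.norm_cpow_eq_rpow_re_of_pos hp0 _
      push_cast at this
      simpa using this
    have hw1 : ‖w‖ = 1 := by rw [hwdef, norm_mul, hχ1, hcp, one_mul]
    have hwre : |w.re| ≤ 1 := by
      calc |w.re| ≤ ‖w‖ := Complex.abs_re_le_norm w
      _ = 1 := hw1
    rw [abs_le] at hwre
    set u : ℝ := 1 - w.re with hudef
    have hu0 : 0 ≤ u := by simp [hudef]; linarith [hwre.2]
    have hu2 : u ≤ 2 := by simp [hudef]; linarith [hwre.1]
    have hsplit : χ p * (p:ℂ) ^ (-(α:ℂ) - (t:ℂ)*Complex.I) = (r:ℂ) * w := by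
      have he : (-(α:ℂ) - (t:ℂ)*Complex.I) = (-(α:ℂ)) + (-(t:ℂ)*Complex.I) := by ring
      rw [hwdef, he, Complex.cpow_add _ _ (by exact_mod_cast hp.pos.ne' : (p:ℂ) ≠ 0), hcastα]
      ring
    have hre : ((1:ℂ) - (r:ℂ)*w).re = 1 - r * w.re := by
      simp [Complex.sub_re, Complex.mul_re]
    have hlow : (1-r) * Real.exp (r*u) ≤ ‖(1:ℂ) - (r:ℂ)*w‖ := by
      have h1 := Complex.re_le_norm ((1:ℂ) - (r:ℂ)*w)
      rw [hre] at h1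
      have h2 := keyB hr0.le hr1.le hu0 hu2
      calc (1-r) * Real.exp (r*u) ≤ 1 - r + r*u := h2
        _ = 1 - r * w.re := by rw [hudef]; ring
        _ ≤ _ := h1
    have hlpos : 0 < (1-r) * Real.exp (r*u) := mul_pos (by linarith) (Real.exp_pos _)
    have hχ0 : (1 : DirichletCharacter ℂ q) p = 1 := by
      exact MulChar.one_apply hu
    have hRHS1 : ‖(1 - (1 : DirichletCharacter ℂ q) p * (p:ℂ) ^ (-(α:ℂ)))⁻¹‖ = (1-r)⁻¹ := by
      rw [hχ0, one_mul, hcastα, norm_inv]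
      rw [show (1:ℂ) - (r:ℂ) = ((1 - r : ℝ) : ℂ) by push_cast; ring]
      rw [Complex.norm_real, Real.norm_eq_abs, abs_of_pos (by linarith)]
    have hexp : (if p ∣ q then (0:ℝ) else (1 - (χ p * (p:ℂ) ^ (-(t:ℂ)*Complex.I)).re) / (p:ℝ)^α)
        = r * u := by
      rw [if_neg hdvd, ← hwdef, ← hudef, hrdef, Real.rpow_neg hp0.le, div_eq_mul_inv]
      ring
    rw [hsplit, hRHS1, hexp, norm_inv, Real.exp_neg, ← mul_inv]
    exact inv_anti₀ hlpos hlow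

/-- **Soundararajan-style Euler product comparison (used in §3.3 of the paper).**
For any Dirichlet character `χ` mod `q` (with `χ₀` the principal character mod `q`),
`y ≥ 2`, `0 < α ≤ 1` and real `t`:
`|∏_{p ≤ y}(1 − χ(p)p^{−α−it})^{−1}|
  ≤ (∏_{p ≤ y}(1 − χ₀(p)p^{−α})^{−1}) · exp(−∑_{p ≤ y, p ∤ q}(1 − Re(χ(p)p^{−it}))/p^α)`. -/
theorem euler_product_comparison (q : ℕ) (χ : DirichletCharacter ℂ q) (y α t : ℝ)
    (hy : 2 ≤ y) (hα0 : 0 < α) (hα1 : α ≤ 1) :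
    ‖∏ p ∈ (Finset.Icc 1 ⌊y⌋₊).filter Nat.Prime,
        (1 - χ p * (p : ℂ) ^ (-(α : ℂ) - (t : ℂ) * Complex.I))⁻¹‖ ≤
      ‖∏ p ∈ (Finset.Icc 1 ⌊y⌋₊).filter Nat.Prime,
          (1 - (1 : DirichletCharacter ℂ q) p * (p : ℂ) ^ (-(α : ℂ)))⁻¹‖ *
        Real.exp (-∑ p ∈ ((Finset.Icc 1 ⌊y⌋₊).filter Nat.Prime).filter (fun p => ¬ p ∣ q),
          (1 - (χ p * (p : ℂ) ^ (-(t : ℂ) * Complex.I)).re) / (p : ℝ) ^ α) := by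
  classical
  set S := (Finset.Icc 1 ⌊y⌋₊).filter Nat.Prime with hS
  set c : ℕ → ℝ := fun p => if p ∣ q then 0 else
    (1 - (χ p * (p : ℂ) ^ (-(t : ℂ) * Complex.I)).re) / (p : ℝ) ^ α with hc
  have hsum : ∑ p ∈ S.filter (fun p => ¬ p ∣ q),
      (1 - (χ p * (p : ℂ) ^ (-(t : ℂ) * Complex.I)).re) / (p : ℝ) ^ α = ∑ p ∈ S, c p := by
    rw [Finset.sum_filter]
    apply Finset.sum_congr rfl
    intro p _
    by_cases h : p ∣ q <;> simp [hc, h]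
  rw [hsum, norm_prod, norm_prod, ← Finset.sum_neg_distrib, Real.exp_sum,
    ← Finset.prod_mul_distrib]
  apply Finset.prod_le_prod
  · intro p _; exact norm_nonneg _
  · intro p hpS
    have hp : p.Prime := (Finset.mem_filter.mp hpS).2
    have := keyC χ hp α t hα0
    simpa [hc] using this
end
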